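/- arXiv:2103.01460 — 3 statements merged into one kernel-verified Lean document; each statement's English description precedes it below -/
import Mathlib

section
/- (Lemma 1, monotonicity of follower utility in leader's trust.) Fix δ2 ≥ 0 and let r : S1 → S2 be the follower's limited-trust best response map (which does not depend on δ1). For δ1 ≥ 0, let s*(δ1) be the leader's limited-trust optimal strategy: a maximizer of u1(s,r(s))+u2(s,r(s)) over {s ∈ S1 : u1(g,r(g)) − u1(s,r(s)) ≤ δ1}, where g ∈ argmax_s u1(s,r(s)) is the leader's greedy strategy. Assume at each trust level the leader breaks ties by choosing, among optimal strategies, one maximizing its own utility u1(s,r(s)). Then the follower's realized utility u2(s*(δ1), r(s*(δ1))) is monotone nondecreasing in δ1. -/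
/-- Lemma 1: with the follower's response map `r` fixed, and the
leader choosing a net-utility maximizer over the feasible set
`L(δ1) = {s : u1(g,r g) − u1(s,r s) ≤ δ1}` with ties broken in favor of its own
utility, the follower's realized utility is monotone nondecreasing in `δ1`. -/
theorem follower_utility_monotone_in_leader_trust
    {S1 S2 : Type*} [Fintype S1] [Fintype S2] [Nonempty S1] [Nonempty S2]
    (u1 u2 : S1 → S2 → ℝ) (r : S1 → S2)
    (g : S1) (hg : ∀ s : S1, u1 s (r s) ≤ u1 g (r g))
    (δ1 δ1' : ℝ) (hδ1 : 0 ≤ δ1) (hδ : δ1 ≤ δ1')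
    (s s' : S1)
    -- s is the leader's limited-trust optimal strategy at trust level δ1
    (hs_feas : u1 g (r g) - u1 s (r s) ≤ δ1)
    (hs_max : ∀ t : S1, u1 g (r g) - u1 t (r t) ≤ δ1 →
      u1 t (r t) + u2 t (r t) ≤ u1 s (r s) + u2 s (r s))
    (hs_tie : ∀ t : S1, u1 g (r g) - u1 t (r t) ≤ δ1 →
      u1 t (r t) + u2 t (r t) = u1 s (r s) + u2 s (r s) →
      u1 t (r t) ≤ u1 s (r s))
    -- s' is the leader's limited-trust optimal strategy at trust level δ1'
    (hs'_feas : u1 g (r g) - u1 s' (r s') ≤ δ1')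
    (hs'_max : ∀ t : S1, u1 g (r g) - u1 t (r t) ≤ δ1' →
      u1 t (r t) + u2 t (r t) ≤ u1 s' (r s') + u2 s' (r s'))
    (hs'_tie : ∀ t : S1, u1 g (r g) - u1 t (r t) ≤ δ1' →
      u1 t (r t) + u2 t (r t) = u1 s' (r s') + u2 s' (r s') →
      u1 t (r t) ≤ u1 s' (r s')) :
    u2 s (r s) ≤ u2 s' (r s') := by
  have hnet : u1 s (r s) + u2 s (r s) ≤ u1 s' (r s') + u2 s' (r s') :=
    hs'_max s (le_trans hs_feas hδ)
  by_cases h : u1 s' (r s') ≤ u1 s (r s)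
  · linarith
  · push_neg at h
    have hfeas : u1 g (r g) - u1 s' (r s') ≤ δ1 := by linarith
    have h1 := hs_max s' hfeas
    have h2 := hs_tie s' hfeas (le_antisymm h1 (by linarith))
    linarith
end

section
/- (Corollary to Lemma 1.) Under the same setup and tie-breaking rule, the leader's realized utility u1(s*(δ1), r(s*(δ1))) is monotone nonincreasing in δ1, and the net utility u1(s*(δ1),r(s*(δ1))) + u2(s*(δ1),r(s*(δ1))) is monotone nondecreasing in δ1. -/
/-- Corollary to Lemma 1: under the same setup and tie-breaking
rule, the leader's realized utility is monotone nonincreasing in `δ1`, and the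
net utility is monotone nondecreasing in `δ1`. -/
theorem leader_utility_antitone_net_monotone_in_leader_trust
    {S1 S2 : Type*} [Fintype S1] [Fintype S2] [Nonempty S1] [Nonempty S2]
    (u1 u2 : S1 → S2 → ℝ) (r : S1 → S2)
    (g : S1) (hg : ∀ s : S1, u1 s (r s) ≤ u1 g (r g))
    (δ1 δ1' : ℝ) (hδ1 : 0 ≤ δ1) (hδ : δ1 ≤ δ1')
    (s s' : S1)
    (hs_feas : u1 g (r g) - u1 s (r s) ≤ δ1)
    (hs_max : ∀ t : S1, u1 g (r g) - u1 t (r t) ≤ δ1 →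
      u1 t (r t) + u2 t (r t) ≤ u1 s (r s) + u2 s (r s))
    (hs_tie : ∀ t : S1, u1 g (r g) - u1 t (r t) ≤ δ1 →
      u1 t (r t) + u2 t (r t) = u1 s (r s) + u2 s (r s) →
      u1 t (r t) ≤ u1 s (r s))
    (hs'_feas : u1 g (r g) - u1 s' (r s') ≤ δ1')
    (hs'_max : ∀ t : S1, u1 g (r g) - u1 t (r t) ≤ δ1' →
      u1 t (r t) + u2 t (r t) ≤ u1 s' (r s') + u2 s' (r s'))
    (hs'_tie : ∀ t : S1, u1 g (r g) - u1 t (r t) ≤ δ1' →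
      u1 t (r t) + u2 t (r t) = u1 s' (r s') + u2 s' (r s') →
      u1 t (r t) ≤ u1 s' (r s')) :
    u1 s' (r s') ≤ u1 s (r s) ∧
      u1 s (r s) + u2 s (r s) ≤ u1 s' (r s') + u2 s' (r s') := by
  have hnet : u1 s (r s) + u2 s (r s) ≤ u1 s' (r s') + u2 s' (r s') :=
    hs'_max s (hs_feas.trans hδ)
  refine ⟨?_, hnet⟩
  by_cases h : u1 g (r g) - u1 s' (r s') ≤ δ1
  · exact hs_tie s' h (le_antisymm (hs_max s' h) hnet)
  · push_neg at h
    linarith [hs_feas]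
end

section
/- (Identification of the follower's trust level from its response.) Consider a 1×n game where the follower's strategies s_1,…,s_k lie on the Pareto frontier in (u2, u1+u2) coordinates, labeled so that b_1 > b_2 > … > b_k and c_1 < c_2 < … < c_k, where b_j = u2(s_j) and c_j = u1(s_j)+u2(s_j), and every non-frontier strategy is dominated by some frontier strategy. Then for δ2 ≥ 0, the follower's limited-trust best response equals s_j if and only if b_1 − b_j ≤ δ2 < b_1 − b_{j+1}, with the convention b_{k+1} = −∞. -/
/-- identification of the follower's trust level from its
response: in a 1×n game whose Pareto frontier in `(u2, u1+u2)` coordinates is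
`s 0, s 1, …, s (k-1)` with `u2` strictly decreasing and net utility strictly
increasing along the frontier (so `b_1 = u2 (s 0)` is the greedy value), and
every non-frontier strategy dominated by some frontier strategy, the follower's
limited-trust best response (ties broken in favor of higher `u2`) equals `s j`
iff `b_1 − b_j ≤ δ2 < b_1 − b_{j+1}` (the upper constraint being vacuous for
`j = k-1`, i.e. `b_{k+1} = −∞`; since `u2` is strictly decreasing along the
frontier, `δ2 < b_1 − b_{j+1}` is equivalent to `δ2 < b_1 − b_{j'}` for all
`j' > j`). -/
theorem frontier_characterizes_LTBR
    {S : Type*} [Fintype S] {k : ℕ} (hk : 0 < k)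
    (u1 u2 : S → ℝ) (s : Fin k → S)
    (hb : ∀ i j : Fin k, i < j → u2 (s j) < u2 (s i))
    (hc : ∀ i j : Fin k, i < j → u1 (s i) + u2 (s i) < u1 (s j) + u2 (s j))
    (hgreedy : ∀ t : S, u2 t ≤ u2 (s ⟨0, hk⟩))
    (hdom : ∀ t : S, (∀ j : Fin k, t ≠ s j) →
      ∃ j : Fin k, u2 t ≤ u2 (s j) ∧ u1 t + u2 t ≤ u1 (s j) + u2 (s j) ∧
        (u2 t < u2 (s j) ∨ u1 t + u2 t < u1 (s j) + u2 (s j)))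
    (δ2 : ℝ) (hδ2 : 0 ≤ δ2) (j : Fin k) :
    ( -- s j is the limited-trust best response with trust level δ2:
      u2 (s ⟨0, hk⟩) - u2 (s j) ≤ δ2 ∧
      (∀ t : S, u2 (s ⟨0, hk⟩) - u2 t ≤ δ2 →
        u1 t + u2 t ≤ u1 (s j) + u2 (s j)) ∧
      (∀ t : S, u2 (s ⟨0, hk⟩) - u2 t ≤ δ2 →
        u1 t + u2 t = u1 (s j) + u2 (s j) → u2 t ≤ u2 (s j)) )
    ↔ ( u2 (s ⟨0, hk⟩) - u2 (s j) ≤ δ2 ∧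
        ∀ j' : Fin k, j < j' → δ2 < u2 (s ⟨0, hk⟩) - u2 (s j') ) := by

  constructor
  · rintro ⟨h1, h2, h3⟩
    refine ⟨h1, fun j' hj' => ?_⟩
    by_contra h
    push_neg at h
    have hcj := h2 (s j') h
    exact absurd hcj (not_le.mpr (hc j j' hj'))
  · rintro ⟨h1, h2⟩
    have key : ∀ j'' : Fin k, u2 (s ⟨0, hk⟩) - u2 (s j'') ≤ δ2 → j'' ≤ j := by
      intro j'' hfeas
      by_contra h
      push_neg at h
      exact absurd hfeas (not_le.mpr (h2 j'' h))
    have cmono : ∀ j'' : Fin k, j'' ≤ j →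
        u1 (s j'') + u2 (s j'') ≤ u1 (s j) + u2 (s j) := by
      intro j'' hle
      rcases lt_or_eq_of_le hle with hlt | heq
      · exact le_of_lt (hc j'' j hlt)
      · rw [heq]
    refine ⟨h1, ?_, ?_⟩
    · intro t ht
      by_cases hfr : ∀ j' : Fin k, t ≠ s j'
      · obtain ⟨j'', hu2, hcle, _⟩ := hdom t hfr
        have hf : u2 (s ⟨0, hk⟩) - u2 (s j'') ≤ δ2 := by linarith
        exact le_trans hcle (cmono j'' (key j'' hf))
      · push_neg at hfr
        obtain ⟨j', rfl⟩ := hfr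
        exact cmono j' (key j' ht)
    · intro t ht hceq
      by_cases hfr : ∀ j' : Fin k, t ≠ s j'
      · obtain ⟨j'', hu2, hcle, hst⟩ := hdom t hfr
        have hf : u2 (s ⟨0, hk⟩) - u2 (s j'') ≤ δ2 := by linarith
        have hle := key j'' hf
        rcases lt_or_eq_of_le hle with hlt | heq
        · have := hc j'' j hlt
          linarith
        · subst heq
          rcases hst with h | h
          · linarith
          · linarith
      · push_neg at hfr
        obtain ⟨j', rfl⟩ := hfr
        have hle := key j' ht
        rcases lt_or_eq_of_le hle with hlt | heq
        · have := hc j' j hlt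
          linarith
        · rw [heq]
end
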